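/- Let p* be a path from s to t in a weighted graph G, and suppose the published weights w' make p* strictly longer than every other s–t path; equivalently, suppose p* is the longest s–t path. Then the set of edges an attacker must remove so that p* becomes the shortest s–t path consists of edges cutting every s–t path shorter than p*, and the iterative procedure that repeatedly increases the weight of an edge of a competing path by the length gap δ = ℓ(p) − ℓ(p*) terminates with w' a feasible point (i.e., the attacker's minimum-cost attack is well-defined and the weight-increase procedure produces weights under which every s–t path other than p* has length at least that of p*). -/

import Mathlib

open SimpleGraph

/-- Length of a walk with respect to edge weights `w`. -/
noncomputable def walkLen {V : Type*} {G : SimpleGraph V} (w : Sym2 V → ℝ) {s t : V}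
    (p : G.Walk s t) : ℝ := (p.edges.map w).sum

lemma path_eq_of_edges_subset {V : Type*} {G : SimpleGraph V} {s t : V}
    (p : G.Walk s t) (hp : p.IsPath) :
    ∀ q : G.Walk s t, q.IsPath → (∀ e ∈ q.edges, e ∈ p.edges) → q = p := by
  induction p with
  | nil =>
    intro q hq hsub
    have he : q.edges = [] := List.eq_nil_iff_forall_not_mem.2 fun e he => by
      simpa using hsub e he
    have : q.length = 0 := by rw [← Walk.length_edges, he]; rfl
    exact Walk.nil_iff_eq_nil.mp (Walk.length_eq_zero_iff.mp this)
  | cons h p' ih =>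
    rename_i u v w
    intro q hq hsub
    obtain ⟨hp', hns⟩ := (Walk.cons_isPath_iff h p').mp hp
    cases q with
    | nil =>
      exact absurd p'.end_mem_support hns
    | cons h2 q' =>
      rename_i x
      obtain ⟨hq', hqns⟩ := (Walk.cons_isPath_iff h2 q').mp hq
      have h1 : s(u, x) ∈ (Walk.cons h p').edges := hsub _ (by simp)
      rw [Walk.edges_cons, List.mem_cons] at h1
      have hwv : x = v := by
        rcases h1 with h1 | h1
        · rw [Sym2.eq_iff] at h1
          rcases h1 with ⟨-, h1⟩ | ⟨h1, -⟩
          · exact h1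
          · exact absurd h1 h.ne
        · exact absurd (Walk.fst_mem_support_of_mem_edges p' h1) hns
      subst hwv
      have hsub' : ∀ e ∈ q'.edges, e ∈ p'.edges := by
        intro e he
        have := hsub e (by simp [he])
        rw [Walk.edges_cons, List.mem_cons] at this
        rcases this with rfl | h3
        · exact absurd (Walk.fst_mem_support_of_mem_edges q' he) hqns
        · exact h3
      rw [ih hp' q' hq' hsub']

lemma walkLen_transfer {V : Type*} {G H : SimpleGraph V} (w : Sym2 V → ℝ) {s t : V}
    (p : G.Walk s t) (hp : ∀ e ∈ p.edges, e ∈ H.edgeSet) :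
    walkLen w (p.transfer H hp) = walkLen w p := by
  unfold walkLen
  rw [Walk.edges_transfer]

lemma walkLen_nonneg {V : Type*} {G : SimpleGraph V} {w : Sym2 V → ℝ}
    (hw : ∀ e, 0 < w e) {s t : V} (p : G.Walk s t) : 0 ≤ walkLen w p := by
  unfold walkLen
  apply List.sum_nonneg
  intro x hx
  obtain ⟨e, -, rfl⟩ := List.mem_map.mp hx
  exact (hw e).le

/-- If the published weights `w'` make `p*` strictly longer than every other simple
`s`–`t` path, then (i) an edge set (disjoint from `p*`, avoiding its edges) makes `p*`
the shortest `s`–`t` path iff it hits every other simple `s`–`t` path (all of which are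
shorter than `p*`), so the attacker's minimum-cost attack is the minimum-cost such hitting
set; and (ii) the weight-increase procedure terminates: there exist weights, obtained from
`w'` by only increasing weights of edges off `p*`, under which every `s`–`t` path other
than `p*` has length at least that of `p*` (a feasible point for Zero-Sum Cut Defense). -/
theorem stmt2 {V : Type*} [Fintype V] (G : SimpleGraph V) (hG : G.Connected)
    (w' : Sym2 V → ℝ) (hw' : ∀ e, 0 < w' e)
    (s t : V) (pstar : G.Walk s t) (hps : pstar.IsPath)
    (hlongest : ∀ q : G.Walk s t, q.IsPath → q ≠ pstar → walkLen w' q < walkLen w' pstar) :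
    (∀ E' : Finset (Sym2 V), ↑E' ⊆ G.edgeSet → (∀ e ∈ pstar.edges, e ∉ E') →
      ((∀ q : (G.deleteEdges ↑E').Walk s t, q.IsPath → walkLen w' pstar ≤ walkLen w' q) ↔
        (∀ q : G.Walk s t, q.IsPath → q ≠ pstar → ∃ e ∈ q.edges, e ∈ E'))) ∧
    (∃ w'' : Sym2 V → ℝ, (∀ e, w' e ≤ w'' e) ∧ (∀ e ∈ pstar.edges, w'' e = w' e) ∧
      ∀ q : G.Walk s t, q.IsPath → q ≠ pstar → walkLen w'' pstar ≤ walkLen w'' q) := by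
  constructor
  · intro E' hE1 hE2
    constructor
    · intro hL q hq hne
      by_contra hc
      push_neg at hc
      have he : ∀ e ∈ q.edges, e ∈ (G.deleteEdges (↑E' : Set (Sym2 V))).edgeSet := by
        intro e he
        rw [edgeSet_deleteEdges]
        exact ⟨q.edges_subset_edgeSet he, by simpa using hc e he⟩
      have := hL (q.transfer _ he) (hq.transfer he)
      rw [walkLen_transfer] at this
      exact absurd this (not_le.mpr (hlongest q hq hne))
    · intro hR q hq
      have he : ∀ e ∈ q.edges, e ∈ G.edgeSet := fun e he =>
        ((edgeSet_deleteEdges _ ▸ q.edges_subset_edgeSet he) : _ ∈ G.edgeSet \ _).1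
      have hnotE : ∀ e ∈ q.edges, e ∉ E' := by
        intro e hein
        have := q.edges_subset_edgeSet hein
        rw [edgeSet_deleteEdges] at this
        simpa using this.2
      set q1 := q.transfer G he with hq1
      by_cases heq : q1 = pstar
      · rw [← heq, walkLen_transfer]
      · obtain ⟨e, he1, he2⟩ := hR q1 (hq.transfer he) heq
        rw [Walk.edges_transfer] at he1
        exact absurd he2 (hnotE e he1)
  · classical
    set L := walkLen w' pstar with hL
    have hL0 : 0 ≤ L := walkLen_nonneg hw' pstar
    refine ⟨fun e => if e ∈ pstar.edges then w' e else w' e + L, ?_, ?_, ?_⟩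
    · intro e
      show w' e ≤ if e ∈ pstar.edges then w' e else w' e + L
      by_cases h : e ∈ pstar.edges
      · rw [if_pos h]
      · rw [if_neg h]; linarith
    · intro e he
      show (if e ∈ pstar.edges then w' e else w' e + L) = w' e
      rw [if_pos he]
    · intro q hq hne
      have hstar : walkLen (fun e => if e ∈ pstar.edges then w' e else w' e + L) pstar = L := by
        rw [hL]
        unfold walkLen
        congr 1
        apply List.map_congr_left
        intro e he
        show (if e ∈ pstar.edges then w' e else w' e + L) = w' e
        rw [if_pos he]
      rw [hstar]
      obtain ⟨e0, he0, he0n⟩ : ∃ e ∈ q.edges, e ∉ pstar.edges := by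
        by_contra hc
        push_neg at hc
        exact hne (path_eq_of_edges_subset pstar hps q hq hc)
      unfold walkLen
      have key : w' e0 + L ≤ (q.edges.map (fun e => if e ∈ pstar.edges then w' e else w' e + L)).sum := by
        apply List.single_le_sum
        · intro x hx
          obtain ⟨e, -, rfl⟩ := List.mem_map.mp hx
          show 0 ≤ if e ∈ pstar.edges then w' e else w' e + L
          by_cases h : e ∈ pstar.edges
          · rw [if_pos h]; exact (hw' e).le
          · rw [if_neg h]; have := (hw' e).le; linarith
        · rw [List.mem_map]
          refine ⟨e0, he0, ?_⟩
          show (if e0 ∈ pstar.edges then w' e0 else w' e0 + L) = w' e0 + L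
          rw [if_neg he0n]
      have := (hw' e0).le
      linarith
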